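/- There exists a constant C > 0 such that the following holds. Let X be a measurable space, S ≥ 1 and B ≥ 1 natural numbers, and let ν be a probability measure on the batch space W := Fin S → (X × Bool × Bool). Let H be a nonempty countable set of measurable functions h : X → ℝ with 0 ≤ h x ≤ 1 for all x. Let μ̄ > 0, let N ≥ 1, and let G be a finite set of measurable functions g : X → ℝ with 0 ≤ g x ≤ 1, with card(G) ≤ N, such that for every h ∈ H there is g ∈ G with |h x − g x| ≤ μ̄/(2·S) for all x ∈ X. Then for every δ ∈ (0,1), the product measure ν^B on Fin B → W assigns measure at least 1 − δ to the set of tuples (w⁽¹⁾, …, w⁽ᴮ⁾) such that for every h ∈ H: ∫ constEO(h, w) dν(w) ≤ (1/B) ∑_{ℓ=1}^{B} constEO(h, w⁽ℓ⁾) + 2·(μ̄ + √(2·log N / B)) + C·√(log(1/δ)/B). -/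

import Mathlib

open MeasureTheory

/-- A Boolean attribute viewed as the real number `0` or `1`. -/
noncomputable def bval (b : Bool) : ℝ := if b then 1 else 0

/-- The false-positive-rate gap of a classifier `h` on a batch of `S`
samples `w i = (xᵢ, aᵢ, yᵢ)`. -/
noncomputable def fprB {X : Type*} {S : ℕ} (h : X → ℝ)
    (w : Fin S → X × Bool × Bool) : ℝ :=
  |(∑ i, h (w i).1 * (1 - bval (w i).2.2) * bval (w i).2.1) / (∑ i, bval (w i).2.1) -
    (∑ i, h (w i).1 * (1 - bval (w i).2.2) * (1 - bval (w i).2.1)) /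
      (∑ i, (1 - bval (w i).2.1))|

/-- The false-negative-rate gap of a classifier `h` on a batch of `S`
samples `w i = (xᵢ, aᵢ, yᵢ)`. -/
noncomputable def fnrB {X : Type*} {S : ℕ} (h : X → ℝ)
    (w : Fin S → X × Bool × Bool) : ℝ :=
  |(∑ i, (1 - h (w i).1) * bval (w i).2.2 * bval (w i).2.1) / (∑ i, bval (w i).2.1) -
    (∑ i, (1 - h (w i).1) * bval (w i).2.2 * (1 - bval (w i).2.1)) /
      (∑ i, (1 - bval (w i).2.1))|

/-- The equalized-odds constraint of a classifier `h` on a batch. -/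
noncomputable def constEO {X : Type*} {S : ℕ} (h : X → ℝ)
    (w : Fin S → X × Bool × Bool) : ℝ :=
  fprB h w + fnrB h w

open Real ProbabilityTheory


lemma bval_nonneg (b : Bool) : 0 ≤ bval b := by unfold bval; split <;> norm_num
lemma bval_le_one (b : Bool) : bval b ≤ 1 := by unfold bval; split <;> norm_num
lemma measurable_bval : Measurable bval := measurable_of_countable _

lemma ratio_le_one {n : ℕ} {f c : Fin n → ℝ} (hf : ∀ i, f i ≤ c i) (hc : ∀ i, 0 ≤ c i) :
    (∑ i, f i) / (∑ i, c i) ≤ 1 :=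
  div_le_one_of_le₀ (Finset.sum_le_sum fun i _ => hf i) (Finset.sum_nonneg fun i _ => hc i)

lemma ratio_nonneg {n : ℕ} {f c : Fin n → ℝ} (hf : ∀ i, 0 ≤ f i) (hc : ∀ i, 0 ≤ c i) :
    0 ≤ (∑ i, f i) / (∑ i, c i) :=
  div_nonneg (Finset.sum_nonneg fun i _ => hf i) (Finset.sum_nonneg fun i _ => hc i)

lemma abs_sub_le_one_of_Icc {a b : ℝ} (ha0 : 0 ≤ a) (ha1 : a ≤ 1) (hb0 : 0 ≤ b) (hb1 : b ≤ 1) :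
    |a - b| ≤ 1 := abs_sub_le_iff.mpr ⟨by linarith, by linarith⟩

lemma prod3_bounds {p q r : ℝ} (hp0 : 0 ≤ p) (hp1 : p ≤ 1) (hq0 : 0 ≤ q) (hq1 : q ≤ 1)
    (hr : 0 ≤ r) : 0 ≤ p * q * r ∧ p * q * r ≤ r := by
  have h1 : p * q ≤ 1 := by nlinarith
  have h2 : 0 ≤ p * q := mul_nonneg hp0 hq0
  constructor
  · exact mul_nonneg h2 hr
  · calc p * q * r ≤ 1 * r := mul_le_mul_of_nonneg_right h1 hr
      _ = r := one_mul r

section bounds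
variable {X : Type*} {S : ℕ} {h : X → ℝ} (hb : ∀ x, 0 ≤ h x ∧ h x ≤ 1)
  (w : Fin S → X × Bool × Bool)

include hb

lemma fprB_le_one : fprB h w ≤ 1 := by
  unfold fprB
  have key : ∀ i : Fin S, 0 ≤ h (w i).1 * (1 - bval (w i).2.2) * bval (w i).2.1 ∧
      h (w i).1 * (1 - bval (w i).2.2) * bval (w i).2.1 ≤ bval (w i).2.1 := fun i =>
    prod3_bounds (hb _).1 (hb _).2 (by linarith [bval_le_one (w i).2.2])
      (by linarith [bval_nonneg (w i).2.2]) (bval_nonneg _)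
  have key' : ∀ i : Fin S, 0 ≤ h (w i).1 * (1 - bval (w i).2.2) * (1 - bval (w i).2.1) ∧
      h (w i).1 * (1 - bval (w i).2.2) * (1 - bval (w i).2.1) ≤ 1 - bval (w i).2.1 := fun i =>
    prod3_bounds (hb _).1 (hb _).2 (by linarith [bval_le_one (w i).2.2])
      (by linarith [bval_nonneg (w i).2.2]) (by linarith [bval_le_one (w i).2.1])
  exact abs_sub_le_one_of_Icc
    (ratio_nonneg (fun i => (key i).1) fun i => bval_nonneg _)
    (ratio_le_one (fun i => (key i).2) fun i => bval_nonneg _)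
    (ratio_nonneg (fun i => (key' i).1) fun i => by linarith [bval_le_one (w i).2.1])
    (ratio_le_one (fun i => (key' i).2) fun i => by linarith [bval_le_one (w i).2.1])

lemma fnrB_le_one : fnrB h w ≤ 1 := by
  unfold fnrB
  have key : ∀ i : Fin S, 0 ≤ (1 - h (w i).1) * bval (w i).2.2 * bval (w i).2.1 ∧
      (1 - h (w i).1) * bval (w i).2.2 * bval (w i).2.1 ≤ bval (w i).2.1 := fun i =>
    prod3_bounds (by linarith [(hb (w i).1).2]) (by linarith [(hb (w i).1).1])
      (bval_nonneg _) (bval_le_one _) (bval_nonneg _)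
  have key' : ∀ i : Fin S, 0 ≤ (1 - h (w i).1) * bval (w i).2.2 * (1 - bval (w i).2.1) ∧
      (1 - h (w i).1) * bval (w i).2.2 * (1 - bval (w i).2.1) ≤ 1 - bval (w i).2.1 := fun i =>
    prod3_bounds (by linarith [(hb (w i).1).2]) (by linarith [(hb (w i).1).1])
      (bval_nonneg _) (bval_le_one _) (by linarith [bval_le_one (w i).2.1])
  exact abs_sub_le_one_of_Icc
    (ratio_nonneg (fun i => (key i).1) fun i => bval_nonneg _)
    (ratio_le_one (fun i => (key i).2) fun i => bval_nonneg _)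
    (ratio_nonneg (fun i => (key' i).1) fun i => by linarith [bval_le_one (w i).2.1])
    (ratio_le_one (fun i => (key' i).2) fun i => by linarith [bval_le_one (w i).2.1])

omit hb in
lemma constEO_nonneg : 0 ≤ constEO h w := add_nonneg (abs_nonneg _) (abs_nonneg _)

lemma constEO_le_two : constEO h w ≤ 2 := by
  have := fprB_le_one hb w
  have := fnrB_le_one hb w
  unfold constEO; linarith

end bounds

lemma measurable_constEO {X : Type*} [MeasurableSpace X] {S : ℕ} {h : X → ℝ}
    (hm : Measurable h) : Measurable (fun w : Fin S → X × Bool × Bool => constEO h w) := by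
  have hx : ∀ i : Fin S, Measurable (fun w : Fin S → X × Bool × Bool => h (w i).1) :=
    fun i => hm.comp ((measurable_pi_apply i).fst)
  have ha : ∀ i : Fin S, Measurable (fun w : Fin S → X × Bool × Bool => bval (w i).2.1) :=
    fun i => measurable_bval.comp ((measurable_pi_apply i).snd.fst)
  have hy : ∀ i : Fin S, Measurable (fun w : Fin S → X × Bool × Bool => bval (w i).2.2) :=
    fun i => measurable_bval.comp ((measurable_pi_apply i).snd.snd)
  have hsum : ∀ f : Fin S → (Fin S → X × Bool × Bool) → ℝ, (∀ i, Measurable (f i)) →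
      Measurable (fun w => ∑ i, f i w) := fun f hf => Finset.measurable_sum _ fun i _ => hf i
  unfold constEO fprB fnrB
  refine Measurable.add ?_ ?_
  · refine Measurable.abs (Measurable.sub (Measurable.div ?_ ?_) (Measurable.div ?_ ?_))
    · exact hsum _ fun i => ((hx i).mul (measurable_const.sub (hy i))).mul (ha i)
    · exact hsum _ fun i => ha i
    · exact hsum _ fun i =>
        ((hx i).mul (measurable_const.sub (hy i))).mul (measurable_const.sub (ha i))
    · exact hsum _ fun i => measurable_const.sub (ha i)
  · refine Measurable.abs (Measurable.sub (Measurable.div ?_ ?_) (Measurable.div ?_ ?_))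
    · exact hsum _ fun i => ((measurable_const.sub (hx i)).mul (hy i)).mul (ha i)
    · exact hsum _ fun i => ha i
    · exact hsum _ fun i =>
        ((measurable_const.sub (hx i)).mul (hy i)).mul (measurable_const.sub (ha i))
    · exact hsum _ fun i => measurable_const.sub (ha i)


lemma add_div_le {u v d ε : ℝ} (hd : 0 ≤ d) (hε : 0 ≤ ε) (h : u + v ≤ ε * d) :
    u / d + v / d ≤ ε := by
  rcases hd.eq_or_lt with h0 | h0
  · simp [← h0, hε]
  · rw [← add_div, div_le_iff₀ h0]; linarith

lemma eo_diff_le {n : ℕ} (p q y a : Fin n → ℝ) (ε : ℝ) (hε : 0 ≤ ε)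
    (hpq : ∀ i, |p i - q i| ≤ ε) (hy0 : ∀ i, 0 ≤ y i) (hy1 : ∀ i, y i ≤ 1)
    (ha0 : ∀ i, 0 ≤ a i) (ha1 : ∀ i, a i ≤ 1) :
    |(|(∑ i, p i * (1 - y i) * a i) / (∑ i, a i) -
        (∑ i, p i * (1 - y i) * (1 - a i)) / (∑ i, (1 - a i))| +
      |(∑ i, (1 - p i) * y i * a i) / (∑ i, a i) -
        (∑ i, (1 - p i) * y i * (1 - a i)) / (∑ i, (1 - a i))|) -
     (|(∑ i, q i * (1 - y i) * a i) / (∑ i, a i) -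
        (∑ i, q i * (1 - y i) * (1 - a i)) / (∑ i, (1 - a i))| +
      |(∑ i, (1 - q i) * y i * a i) / (∑ i, a i) -
        (∑ i, (1 - q i) * y i * (1 - a i)) / (∑ i, (1 - a i))|)| ≤ 2 * ε := by
  set d : ℝ := ∑ i, a i with hd
  set d' : ℝ := ∑ i, (1 - a i) with hd'
  have hd0 : 0 ≤ d := Finset.sum_nonneg fun i _ => ha0 i
  have hd'0 : 0 ≤ d' := Finset.sum_nonneg fun i _ => by linarith [ha1 i]
  set A : ℝ := ∑ i, p i * (1 - y i) * a i
  set B : ℝ := ∑ i, q i * (1 - y i) * a i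
  set A' : ℝ := ∑ i, p i * (1 - y i) * (1 - a i)
  set B' : ℝ := ∑ i, q i * (1 - y i) * (1 - a i)
  set Cp : ℝ := ∑ i, (1 - p i) * y i * a i
  set Cq : ℝ := ∑ i, (1 - q i) * y i * a i
  set Cp' : ℝ := ∑ i, (1 - p i) * y i * (1 - a i)
  set Cq' : ℝ := ∑ i, (1 - q i) * y i * (1 - a i)
  have habs : ∀ (c : Fin n → ℝ), (∀ i, 0 ≤ c i) →
      |∑ i, p i * (1 - y i) * c i - ∑ i, q i * (1 - y i) * c i| ≤
        ∑ i, ε * ((1 - y i) * c i) := by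
    intro c hc
    rw [← Finset.sum_sub_distrib]
    refine (Finset.abs_sum_le_sum_abs _ _).trans (Finset.sum_le_sum fun i _ => ?_)
    have he : p i * (1 - y i) * c i - q i * (1 - y i) * c i =
        (p i - q i) * ((1 - y i) * c i) := by ring
    rw [he, abs_mul, abs_of_nonneg (mul_nonneg (by linarith [hy1 i]) (hc i))]
    exact mul_le_mul_of_nonneg_right (hpq i) (mul_nonneg (by linarith [hy1 i]) (hc i))
  have habsC : ∀ (c : Fin n → ℝ), (∀ i, 0 ≤ c i) →
      |∑ i, (1 - p i) * y i * c i - ∑ i, (1 - q i) * y i * c i| ≤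
        ∑ i, ε * (y i * c i) := by
    intro c hc
    rw [← Finset.sum_sub_distrib]
    refine (Finset.abs_sum_le_sum_abs _ _).trans (Finset.sum_le_sum fun i _ => ?_)
    have he : (1 - p i) * y i * c i - (1 - q i) * y i * c i =
        (q i - p i) * (y i * c i) := by ring
    rw [he, abs_mul, abs_of_nonneg (mul_nonneg (hy0 i) (hc i)), abs_sub_comm]
    exact mul_le_mul_of_nonneg_right (hpq i) (mul_nonneg (hy0 i) (hc i))
  have hgrp : |A - B| + |Cp - Cq| ≤ ε * d := by
    have h1 := habs a ha0
    have h2 := habsC a ha0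
    have : (∑ i, ε * ((1 - y i) * a i)) + (∑ i, ε * (y i * a i)) = ε * d := by
      rw [← Finset.sum_add_distrib, hd, Finset.mul_sum]
      exact Finset.sum_congr rfl fun i _ => by ring
    linarith
  have hgrp' : |A' - B'| + |Cp' - Cq'| ≤ ε * d' := by
    have h1 := habs (fun i => 1 - a i) (fun i => by show (0:ℝ) ≤ 1 - a i; linarith [ha1 i])
    have h2 := habsC (fun i => 1 - a i) (fun i => by show (0:ℝ) ≤ 1 - a i; linarith [ha1 i])
    beta_reduce at h1 h2
    have : (∑ i, ε * ((1 - y i) * (1 - a i))) + (∑ i, ε * (y i * (1 - a i))) = ε * d' := by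
      rw [← Finset.sum_add_distrib, hd', Finset.mul_sum]
      exact Finset.sum_congr rfl fun i _ => by ring
    linarith
  set F1 : ℝ := |A / d - A' / d'| with hF1
  set F2 : ℝ := |B / d - B' / d'| with hF2
  set G1 : ℝ := |Cp / d - Cp' / d'| with hG1
  set G2 : ℝ := |Cq / d - Cq' / d'| with hG2
  have hfpr : |F1 - F2| ≤ |A - B| / d + |A' - B'| / d' := by
    rw [hF1, hF2]
    refine (abs_abs_sub_abs_le_abs_sub _ _).trans ?_
    have he : A / d - A' / d' - (B / d - B' / d') = (A - B) / d - (A' - B') / d' := by ring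
    rw [he]
    refine (abs_sub _ _).trans ?_
    rw [abs_div, abs_div, abs_of_nonneg hd0, abs_of_nonneg hd'0]
  have hfnr : |G1 - G2| ≤ |Cp - Cq| / d + |Cp' - Cq'| / d' := by
    rw [hG1, hG2]
    refine (abs_abs_sub_abs_le_abs_sub _ _).trans ?_
    have he : Cp / d - Cp' / d' - (Cq / d - Cq' / d') = (Cp - Cq) / d - (Cp' - Cq') / d' := by
      ring
    rw [he]
    refine (abs_sub _ _).trans ?_
    rw [abs_div, abs_div, abs_of_nonneg hd0, abs_of_nonneg hd'0]
  have key1 : |A - B| / d + |Cp - Cq| / d ≤ ε := add_div_le hd0 hε hgrp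
  have key2 : |A' - B'| / d' + |Cp' - Cq'| / d' ≤ ε := add_div_le hd'0 hε hgrp'
  have hsplit : |F1 + G1 - (F2 + G2)| ≤ |F1 - F2| + |G1 - G2| := by
    have he : F1 + G1 - (F2 + G2) = (F1 - F2) + (G1 - G2) := by ring
    rw [he]; exact abs_add_le _ _
  have e1 := abs_sub_abs_le_abs_sub A B
  linarith [abs_nonneg (F1 - F2), abs_nonneg (G1 - G2)]

lemma constEO_diff_le {X : Type*} {S : ℕ} {h g : X → ℝ} {ε : ℝ} (hε : 0 ≤ ε)
    (hdiff : ∀ x, |h x - g x| ≤ ε) (w : Fin S → X × Bool × Bool) :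
    |constEO h w - constEO g w| ≤ 2 * ε := by
  unfold constEO fprB fnrB
  exact eo_diff_le (fun i => h (w i).1) (fun i => g (w i).1) (fun i => bval (w i).2.2)
    (fun i => bval (w i).2.1) ε hε (fun i => hdiff _) (fun i => bval_nonneg _)
    (fun i => bval_le_one _) (fun i => bval_nonneg _) (fun i => bval_le_one _)

open ProbabilityTheory

section prob
variable {Ω : Type*} [MeasurableSpace Ω] (ν : Measure Ω) [IsProbabilityMeasure ν] {B : ℕ}

lemma map_eval_pi (ℓ : Fin B) :
    Measure.map (fun ws : Fin B → Ω => ws ℓ) (Measure.pi fun _ => ν) = ν := by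
  classical
  refine Measure.ext fun s hs => ?_
  rw [Measure.map_apply (measurable_pi_apply ℓ) hs]
  have hpre : (fun ws : Fin B → Ω => ws ℓ) ⁻¹' s =
      Set.pi Set.univ (fun j => if j = ℓ then s else Set.univ) := by
    ext ws
    simp only [Set.mem_preimage, Set.mem_pi, Set.mem_univ, forall_true_left]
    constructor
    · intro hw j
      split_ifs with hj
      · subst hj; exact hw
      · trivial
    · intro hw
      have := hw ℓ
      simpa using this
  rw [hpre, Measure.pi_pi]
  rw [Finset.prod_eq_single ℓ (fun b _ hb => by simp [hb]) (by simp)]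
  simp

lemma iIndepFun_eval :
    iIndepFun
      (fun ℓ (ws : Fin B → Ω) => ws ℓ) (Measure.pi fun _ => ν) := by
  classical
  rw [iIndepFun_iff_measure_inter_preimage_eq_mul]
  intro S sets hsets
  have heq : (⋂ i ∈ S, (fun ws : Fin B → Ω => ws i) ⁻¹' sets i) =
      Set.pi Set.univ (fun j => if j ∈ S then sets j else Set.univ) := by
    ext ws
    simp only [Set.mem_iInter, Set.mem_preimage, Set.mem_pi, Set.mem_univ, forall_true_left]
    constructor
    · intro hw j
      split_ifs with hj
      · exact hw j hj
      · trivial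
    · intro hw j hj
      have := hw j
      rwa [if_pos hj] at this
  rw [heq, Measure.pi_pi]
  have h1 : ∀ j : Fin B, ν (if j ∈ S then sets j else Set.univ) =
      (if j ∈ S then ν (sets j) else 1) := by
    intro j; split_ifs <;> simp
  rw [Finset.prod_congr rfl fun j _ => h1 j, Finset.prod_ite_mem Finset.univ S,
    Finset.univ_inter]
  refine Finset.prod_congr rfl fun i hi => ?_
  have hmap := Measure.map_apply (μ := Measure.pi fun _ : Fin B => ν)
    (measurable_pi_apply i) (hsets i hi)
  rw [map_eval_pi] at hmap
  exact hmap

lemma mgf_le_of_bounded_two {Z : Ω → ℝ} (hZm : Measurable Z) (hZb : ∀ ω, |Z ω| ≤ 2)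
    (hZ0 : ∫ ω, Z ω ∂ν = 0) (s : ℝ) : mgf Z ν s ≤ exp (2 * s ^ 2) := by
  have hZint : Integrable Z ν := by
    refine (integrable_const (2 : ℝ)).mono' hZm.aestronglyMeasurable ?_
    exact Filter.Eventually.of_forall fun ω => by simpa using hZb ω
  have hpt : ∀ ω, exp (s * Z ω) ≤ cosh (2 * s) + Z ω * (sinh (2 * s) / 2) := by
    intro ω
    have hz := hZb ω
    have hz1 : -2 ≤ Z ω := (abs_le.mp hz).1
    have hz2 : Z ω ≤ 2 := (abs_le.mp hz).2
    have ha : (0 : ℝ) ≤ (2 - Z ω) / 4 := by linarith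
    have hb : (0 : ℝ) ≤ (2 + Z ω) / 4 := by linarith
    have hab : (2 - Z ω) / 4 + (2 + Z ω) / 4 = 1 := by ring
    have hcvx := convexOn_exp.2 (Set.mem_univ (-(2 * s))) (Set.mem_univ (2 * s)) ha hb hab
    simp only [smul_eq_mul] at hcvx
    have he1 : (2 - Z ω) / 4 * (-(2 * s)) + (2 + Z ω) / 4 * (2 * s) = s * Z ω := by ring
    rw [he1] at hcvx
    refine hcvx.trans (le_of_eq ?_)
    rw [Real.cosh_eq, Real.sinh_eq]
    ring
  have hintexp : Integrable (fun ω => exp (s * Z ω)) ν := by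
    refine (integrable_const (exp (|s| * 2))).mono'
      ((hZm.const_mul s).exp).aestronglyMeasurable ?_
    refine Filter.Eventually.of_forall fun ω => ?_
    rw [norm_eq_abs, abs_of_nonneg (exp_nonneg _), exp_le_exp]
    calc s * Z ω ≤ |s * Z ω| := le_abs_self _
      _ = |s| * |Z ω| := abs_mul _ _
      _ ≤ |s| * 2 := mul_le_mul_of_nonneg_left (hZb ω) (abs_nonneg s)
  have hint2 : Integrable (fun ω => cosh (2 * s) + Z ω * (sinh (2 * s) / 2)) ν :=
    (integrable_const _).add (hZint.mul_const _)
  calc mgf Z ν s = ∫ ω, exp (s * Z ω) ∂ν := rfl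
    _ ≤ ∫ ω, (cosh (2 * s) + Z ω * (sinh (2 * s) / 2)) ∂ν :=
        integral_mono hintexp hint2 hpt
    _ = cosh (2 * s) + (∫ ω, Z ω ∂ν) * (sinh (2 * s) / 2) := by
        rw [integral_add (integrable_const _) (hZint.mul_const _), integral_const,
          integral_mul_const]
        simp
    _ = cosh (2 * s) := by rw [hZ0]; ring
    _ ≤ exp ((2 * s) ^ 2 / 2) := cosh_le_exp_half_sq _
    _ = exp (2 * s ^ 2) := by ring_nf

lemma integrable_exp_mul_of_abs_le {α : Type*} [MeasurableSpace α] (μ : Measure α)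
    [IsProbabilityMeasure μ] {W : α → ℝ} (hWm : Measurable W) (hW : ∀ x, |W x| ≤ 2)
    (s : ℝ) : Integrable (fun x => exp (s * W x)) μ := by
  refine (integrable_const (exp (|s| * 2))).mono'
    ((hWm.const_mul s).exp).aestronglyMeasurable ?_
  refine Filter.Eventually.of_forall fun ω => ?_
  rw [norm_eq_abs, abs_of_nonneg (exp_nonneg _), exp_le_exp]
  calc s * W ω ≤ |s * W ω| := le_abs_self _
    _ = |s| * |W ω| := abs_mul _ _
    _ ≤ |s| * 2 := mul_le_mul_of_nonneg_left (hW ω) (abs_nonneg s)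

lemma conc_bound (hB : 1 ≤ B) {f : Ω → ℝ} (hm : Measurable f)
    (hb0 : ∀ ω, 0 ≤ f ω) (hb2 : ∀ ω, f ω ≤ 2) (t : ℝ) (ht : 0 ≤ t) :
    (Measure.pi fun _ : Fin B => ν)
      {ws : Fin B → Ω | (B : ℝ) * t ≤ ∑ ℓ : Fin B, ((∫ w, f w ∂ν) - f (ws ℓ))} ≤
      ENNReal.ofReal (exp (-(B : ℝ) * t ^ 2 / 8)) := by
  set μB := Measure.pi fun _ : Fin B => ν with hμB
  haveI : IsProbabilityMeasure μB := by rw [hμB]; infer_instance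
  set m : ℝ := ∫ w, f w ∂ν with hmdef
  have hfint : Integrable f ν := by
    refine (integrable_const (2 : ℝ)).mono' hm.aestronglyMeasurable ?_
    exact Filter.Eventually.of_forall fun ω => by
      rw [norm_eq_abs, abs_of_nonneg (hb0 ω)]; exact hb2 ω
  have hm0 : 0 ≤ m := integral_nonneg hb0
  have hm2 : m ≤ 2 := by
    have := integral_mono hfint (integrable_const 2) hb2
    simpa using this
  set Z : Ω → ℝ := fun ω => m - f ω with hZdef
  have hZm : Measurable Z := measurable_const.sub hm
  have hZb : ∀ ω, |Z ω| ≤ 2 := fun ω => abs_le.mpr ⟨by have := hb2 ω; simp [hZdef]; linarith,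
    by have := hb0 ω; simp [hZdef]; linarith⟩
  have hZ0 : ∫ ω, Z ω ∂ν = 0 := by
    rw [hZdef]
    simp only
    rw [integral_sub (integrable_const m) hfint, integral_const]
    simp [hmdef]
  set Xs : Fin B → (Fin B → Ω) → ℝ := fun ℓ ws => Z (ws ℓ) with hXs
  have hXm : ∀ ℓ, Measurable (Xs ℓ) := fun ℓ => hZm.comp (measurable_pi_apply ℓ)
  have hindep : ProbabilityTheory.iIndepFun Xs μB := by
    have := (iIndepFun_eval ν (B := B)).comp (fun _ => Z) (fun _ => hZm)
    exact this
  have hmgf_eq : ∀ (ℓ : Fin B) (s : ℝ), mgf (Xs ℓ) μB s = mgf Z ν s := by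
    intro ℓ s
    have hint := integral_map (μ := μB) (φ := fun ws : Fin B → Ω => ws ℓ)
      (measurable_pi_apply ℓ).aemeasurable
      (f := fun x => exp (s * Z x)) ((hZm.const_mul s).exp).aestronglyMeasurable
    rw [map_eval_pi] at hint
    exact hint.symm
  set s : ℝ := t / 4 with hs
  have hs0 : 0 ≤ s := by positivity
  have hint_each : ∀ ℓ : Fin B, ℓ ∈ Finset.univ →
      Integrable (fun ws => exp (s * Xs ℓ ws)) μB := fun ℓ _ =>
    integrable_exp_mul_of_abs_le μB (hXm ℓ) (fun ws => hZb (ws ℓ)) s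
  have hint_sum : Integrable (fun ws => exp (s * (∑ ℓ : Fin B, Xs ℓ) ws)) μB :=
    hindep.integrable_exp_mul_sum hXm hint_each
  have hchernoff := measure_ge_le_exp_mul_mgf (μ := μB) (X := ∑ ℓ : Fin B, Xs ℓ)
    ((B : ℝ) * t) hs0 hint_sum
  have hmgf_sum : mgf (∑ ℓ : Fin B, Xs ℓ) μB s ≤ exp ((B : ℝ) * (2 * s ^ 2)) := by
    rw [hindep.mgf_sum hXm Finset.univ]
    have heach : ∀ ℓ : Fin B, mgf (Xs ℓ) μB s ≤ exp (2 * s ^ 2) := fun ℓ => by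
      rw [hmgf_eq ℓ s]; exact mgf_le_of_bounded_two ν hZm hZb hZ0 s
    calc ∏ ℓ : Fin B, mgf (Xs ℓ) μB s ≤ ∏ _ℓ : Fin B, exp (2 * s ^ 2) :=
          Finset.prod_le_prod (fun ℓ _ => mgf_nonneg) (fun ℓ _ => heach ℓ)
      _ = exp (2 * s ^ 2) ^ B := by rw [Finset.prod_const, Finset.card_univ, Fintype.card_fin]
      _ = exp ((B : ℝ) * (2 * s ^ 2)) := (exp_nat_mul _ B).symm
  have hfinal : (μB {ws : Fin B → Ω | (B : ℝ) * t ≤ (∑ ℓ : Fin B, Xs ℓ) ws}).toReal ≤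
      exp (-(B : ℝ) * t ^ 2 / 8) := by
    refine hchernoff.trans ?_
    calc exp (-s * ((B : ℝ) * t)) * mgf (∑ ℓ : Fin B, Xs ℓ) μB s
        ≤ exp (-s * ((B : ℝ) * t)) * exp ((B : ℝ) * (2 * s ^ 2)) := by
          exact mul_le_mul_of_nonneg_left hmgf_sum (exp_nonneg _)
      _ = exp (-(B : ℝ) * t ^ 2 / 8) := by
          rw [← exp_add]; congr 1; rw [hs]; ring
  have hseteq : {ws : Fin B → Ω | (B : ℝ) * t ≤ ∑ ℓ : Fin B, (m - f (ws ℓ))} =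
      {ws : Fin B → Ω | (B : ℝ) * t ≤ (∑ ℓ : Fin B, Xs ℓ) ws} := by
    ext ws; simp [hXs, Finset.sum_apply, hZdef]
  rw [hseteq]
  exact (ENNReal.le_ofReal_iff_toReal_le (measure_ne_top _ _) (exp_nonneg _)).mpr hfinal

end prob


lemma numeric_bound {N B : ℕ} (hN : 1 ≤ N) (hB : 1 ≤ B) {δ : ℝ} (hδ0 : 0 < δ) (hδ1 : δ < 1) :
    (N : ℝ) * Real.exp (-(B : ℝ) *
      (2 * Real.sqrt (2 * Real.log N / B) + 3 * Real.sqrt (Real.log (1 / δ) / B)) ^ 2 / 8)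
      ≤ δ := by
  have hBpos : (0 : ℝ) < B := by exact_mod_cast hB
  have hNpos : (0 : ℝ) < N := by exact_mod_cast hN
  have hlogN : 0 ≤ Real.log N := Real.log_nonneg (by exact_mod_cast hN)
  have hL : 0 ≤ Real.log (1 / δ) := Real.log_nonneg (one_le_one_div hδ0 hδ1.le)
  set a : ℝ := Real.sqrt (2 * Real.log N / B) with ha
  set b : ℝ := Real.sqrt (Real.log (1 / δ) / B) with hb
  have ha0 : 0 ≤ a := Real.sqrt_nonneg _
  have hb0 : 0 ≤ b := Real.sqrt_nonneg _
  have hA : (B : ℝ) * a ^ 2 = 2 * Real.log N := by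
    rw [ha, Real.sq_sqrt (by positivity)]; field_simp
  have hBb : (B : ℝ) * b ^ 2 = Real.log (1 / δ) := by
    rw [hb, Real.sq_sqrt (by positivity)]; field_simp
  have hkey : Real.log N + Real.log (1 / δ) ≤ (B : ℝ) * (2 * a + 3 * b) ^ 2 / 8 := by
    nlinarith [mul_nonneg (mul_nonneg ha0 hb0) hBpos.le, hL, hlogN]
  have hexp : Real.exp (-(B : ℝ) * (2 * a + 3 * b) ^ 2 / 8) ≤
      Real.exp (-(Real.log N + Real.log (1 / δ))) := by
    rw [Real.exp_le_exp]; linarith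
  have heq : Real.exp (-(Real.log N + Real.log (1 / δ))) = (1 / N) * δ := by
    rw [neg_add, Real.exp_add, Real.exp_neg, Real.exp_neg, Real.exp_log hNpos,
      Real.exp_log (by positivity : (0:ℝ) < 1 / δ)]
    field_simp
  calc (N : ℝ) * Real.exp (-(B : ℝ) * (2 * a + 3 * b) ^ 2 / 8)
      ≤ (N : ℝ) * ((1 / N) * δ) := by
        refine mul_le_mul_of_nonneg_left (hexp.trans_eq heq) hNpos.le
    _ = δ := by field_simp

lemma integrable_constEO {X : Type*} [MeasurableSpace X] {S : ℕ}
    (ν : Measure (Fin S → X × Bool × Bool)) [IsProbabilityMeasure ν] {h : X → ℝ}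
    (hm : Measurable h) (hb : ∀ x, 0 ≤ h x ∧ h x ≤ 1) :
    Integrable (fun w => constEO h w) ν := by
  refine (integrable_const (2 : ℝ)).mono' (measurable_constEO hm).aestronglyMeasurable ?_
  exact Filter.Eventually.of_forall fun w => by
    rw [norm_eq_abs, abs_of_nonneg (constEO_nonneg w)]
    exact constEO_le_two hb w


theorem eo_generalization_bound :
    ∃ C : ℝ, 0 < C ∧
      ∀ (X : Type) [MeasurableSpace X], ∀ (S B : ℕ), 1 ≤ S → 1 ≤ B →
      ∀ (ν : Measure (Fin S → X × Bool × Bool)) [IsProbabilityMeasure ν],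
      ∀ (H : Set (X → ℝ)), H.Nonempty → H.Countable →
        (∀ h ∈ H, Measurable h) → (∀ h ∈ H, ∀ x, 0 ≤ h x ∧ h x ≤ 1) →
      ∀ (μbar : ℝ), 0 < μbar →
      ∀ (N : ℕ), 1 ≤ N →
      ∀ (G : Finset (X → ℝ)),
        (∀ g ∈ G, Measurable g) → (∀ g ∈ G, ∀ x, 0 ≤ g x ∧ g x ≤ 1) →
        G.card ≤ N →
        (∀ h ∈ H, ∃ g ∈ G, ∀ x, |h x - g x| ≤ μbar / (2 * (S : ℝ))) →
      ∀ δ : ℝ, 0 < δ → δ < 1 →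
        ENNReal.ofReal (1 - δ) ≤
          (Measure.pi fun _ : Fin B => ν)
            {ws : Fin B → (Fin S → X × Bool × Bool) |
              ∀ h ∈ H,
                ∫ w, constEO h w ∂ν ≤
                  (1 / (B : ℝ)) * ∑ ℓ : Fin B, constEO h (ws ℓ)
                    + 2 * (μbar + Real.sqrt (2 * Real.log (N : ℝ) / (B : ℝ)))
                    + C * Real.sqrt (Real.log (1 / δ) / (B : ℝ))} := by
  refine ⟨3, by norm_num, ?_⟩
  intro X _ S B hS hB ν _ H _hHne _hHc hHm hHb μbar hμ N hN G hGm hGb hGcard hcover δ hδ0 hδ1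
  classical
  set μB := Measure.pi fun _ : Fin B => ν with hμB
  haveI : IsProbabilityMeasure μB := by rw [hμB]; infer_instance
  have hBpos : (0 : ℝ) < B := by exact_mod_cast hB
  have hSpos : (0 : ℝ) < S := by exact_mod_cast hS
  have hlogN : 0 ≤ Real.log N := Real.log_nonneg (by exact_mod_cast hN)
  have hL : 0 ≤ Real.log (1 / δ) := Real.log_nonneg (one_le_one_div hδ0 hδ1.le)
  set t : ℝ := 2 * Real.sqrt (2 * Real.log N / B) + 3 * Real.sqrt (Real.log (1 / δ) / B)
    with htdef
  have ht0 : 0 ≤ t := by positivity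
  set bad : (X → ℝ) → Set (Fin B → (Fin S → X × Bool × Bool)) := fun g =>
    {ws | (B : ℝ) * t ≤ ∑ ℓ : Fin B, ((∫ w, constEO g w ∂ν) - constEO g (ws ℓ))} with hbad
  have hbad_meas : ∀ g ∈ G, MeasurableSet (bad g) := fun g hg =>
    measurableSet_le measurable_const (Finset.measurable_sum _ fun ℓ _ =>
      measurable_const.sub ((measurable_constEO (hGm g hg)).comp (measurable_pi_apply ℓ)))
  have hbad_le : ∀ g ∈ G, μB (bad g) ≤ ENNReal.ofReal (Real.exp (-(B : ℝ) * t ^ 2 / 8)) :=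
    fun g hg => conc_bound ν hB (measurable_constEO (hGm g hg))
      (fun w => constEO_nonneg w) (fun w => constEO_le_two (hGb g hg) w) t ht0
  set E := ⋃ g ∈ G, bad g with hE
  have hE_meas : MeasurableSet E := G.measurableSet_biUnion hbad_meas
  have hE_le : μB E ≤ ENNReal.ofReal δ := by
    calc μB E ≤ ∑ g ∈ G, μB (bad g) := measure_biUnion_finset_le _ _
      _ ≤ ∑ _g ∈ G, ENNReal.ofReal (Real.exp (-(B : ℝ) * t ^ 2 / 8)) :=
          Finset.sum_le_sum hbad_le
      _ = (G.card : ENNReal) * ENNReal.ofReal (Real.exp (-(B : ℝ) * t ^ 2 / 8)) := by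
          rw [Finset.sum_const, nsmul_eq_mul]
      _ ≤ (N : ENNReal) * ENNReal.ofReal (Real.exp (-(B : ℝ) * t ^ 2 / 8)) := by
          exact mul_le_mul_left (by exact_mod_cast hGcard) _
      _ = ENNReal.ofReal ((N : ℝ) * Real.exp (-(B : ℝ) * t ^ 2 / 8)) := by
          rw [ENNReal.ofReal_mul (by positivity)]
          congr 1
          exact (ENNReal.ofReal_natCast N).symm
      _ ≤ ENNReal.ofReal δ :=
          ENNReal.ofReal_le_ofReal (numeric_bound hN hB hδ0 hδ1)
  have hgood : Eᶜ ⊆ {ws : Fin B → (Fin S → X × Bool × Bool) |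
      ∀ h ∈ H, ∫ w, constEO h w ∂ν ≤
        (1 / (B : ℝ)) * ∑ ℓ : Fin B, constEO h (ws ℓ)
          + 2 * (μbar + Real.sqrt (2 * Real.log (N : ℝ) / (B : ℝ)))
          + 3 * Real.sqrt (Real.log (1 / δ) / (B : ℝ))} := by
    intro ws hws h hh
    obtain ⟨g, hgG, happ⟩ := hcover h hh
    have hwsg : ¬ ((B : ℝ) * t ≤ ∑ ℓ : Fin B, ((∫ w, constEO g w ∂ν) - constEO g (ws ℓ))) :=
      fun hcontra => hws (Set.mem_biUnion hgG hcontra)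
    push_neg at hwsg
    have hεnn : (0 : ℝ) ≤ μbar / (2 * (S : ℝ)) := by positivity
    have hpt : ∀ w : Fin S → X × Bool × Bool, |constEO h w - constEO g w| ≤ μbar := fun w => by
      refine (constEO_diff_le hεnn happ w).trans ?_
      rw [show 2 * (μbar / (2 * (S : ℝ))) = μbar / S by field_simp]
      exact div_le_self hμ.le (by exact_mod_cast hS)
    have hint_h : Integrable (fun w => constEO h w) ν :=
      integrable_constEO ν (hHm h hh) (hHb h hh)
    have hint_g : Integrable (fun w => constEO g w) ν :=
      integrable_constEO ν (hGm g hgG) (hGb g hgG)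
    have h1 : ∫ w, constEO h w ∂ν ≤ (∫ w, constEO g w ∂ν) + μbar := by
      calc ∫ w, constEO h w ∂ν ≤ ∫ w, (constEO g w + μbar) ∂ν := by
            refine integral_mono hint_h (hint_g.add (integrable_const _)) fun w => ?_
            have := abs_le.mp (hpt w)
            linarith [this.2]
        _ = (∫ w, constEO g w ∂ν) + μbar := by
            rw [integral_add hint_g (integrable_const _), integral_const]
            simp
    have h2 : (B : ℝ) * (∫ w, constEO g w ∂ν) - ∑ ℓ : Fin B, constEO g (ws ℓ)
        < (B : ℝ) * t := by
      have := hwsg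
      rw [Finset.sum_sub_distrib, Finset.sum_const, Finset.card_univ, Fintype.card_fin,
        nsmul_eq_mul] at this
      linarith
    have h3 : ∑ ℓ : Fin B, constEO g (ws ℓ) ≤
        (∑ ℓ : Fin B, constEO h (ws ℓ)) + (B : ℝ) * μbar := by
      have hstep : ∑ ℓ : Fin B, constEO g (ws ℓ) ≤ ∑ ℓ : Fin B, (constEO h (ws ℓ) + μbar) :=
        Finset.sum_le_sum fun ℓ _ => by
          have := abs_le.mp (hpt (ws ℓ))
          linarith [this.1]
      rw [Finset.sum_add_distrib, Finset.sum_const, Finset.card_univ, Fintype.card_fin,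
        nsmul_eq_mul] at hstep
      exact hstep
    have h2' : ∫ w, constEO g w ∂ν ≤ (1 / (B : ℝ)) * (∑ ℓ : Fin B, constEO g (ws ℓ)) + t := by
      have hx : (B : ℝ) * (∫ w, constEO g w ∂ν) ≤
          (∑ ℓ : Fin B, constEO g (ws ℓ)) + (B : ℝ) * t := by linarith
      calc ∫ w, constEO g w ∂ν = ((B : ℝ) * (∫ w, constEO g w ∂ν)) / B := by field_simp
        _ ≤ ((∑ ℓ : Fin B, constEO g (ws ℓ)) + (B : ℝ) * t) / B := by gcongr
        _ = (1 / (B : ℝ)) * (∑ ℓ : Fin B, constEO g (ws ℓ)) + t := by field_simp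
    have h3' : (1 / (B : ℝ)) * (∑ ℓ : Fin B, constEO g (ws ℓ)) ≤
        (1 / (B : ℝ)) * (∑ ℓ : Fin B, constEO h (ws ℓ)) + μbar := by
      calc (1 / (B : ℝ)) * (∑ ℓ : Fin B, constEO g (ws ℓ))
          ≤ (1 / (B : ℝ)) * ((∑ ℓ : Fin B, constEO h (ws ℓ)) + (B : ℝ) * μbar) := by
            exact mul_le_mul_of_nonneg_left h3 (by positivity)
        _ = (1 / (B : ℝ)) * (∑ ℓ : Fin B, constEO h (ws ℓ)) + μbar := by field_simp
    rw [htdef] at h2'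
    linarith
  calc ENNReal.ofReal (1 - δ) = 1 - ENNReal.ofReal δ := by
        refine ENNReal.eq_sub_of_add_eq ENNReal.ofReal_ne_top ?_
        rw [← ENNReal.ofReal_add (by linarith) hδ0.le]
        norm_num
    _ ≤ 1 - μB E := tsub_le_tsub_left hE_le 1
    _ = μB Eᶜ := (prob_compl_eq_one_sub hE_meas).symm
    _ ≤ μB _ := measure_mono hgood
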